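/- Over Z/2, for every integer i ≥ 1, the cochain y(i) := Σ_{r=0}^{i−1} e_{2i−2r−1} ∧ e_{2i+2r+1} is a 2-cocycle of the complex C*(L_1), i.e., δ₁(y(i)) = 0. -/

import Mathlib

noncomputable section

/-- Ground field `Z/2`. -/
abbrev K2 := ZMod 2

/-- The free `Z/2`-module on basis `(e_i)_{i ≥ 1}`. -/
abbrev V1 := {i : ℕ // 1 ≤ i} →₀ K2

/-- The exterior algebra over `Z/2` on the space with basis `(e_i)_{i ≥ 1}`. -/
abbrev Lam1 := ExteriorAlgebra K2 V1

/-- The generator `e_i` (defined to be `0` for the irrelevant case `i = 0`). -/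
noncomputable def E (i : ℕ) : Lam1 :=
  if h : 1 ≤ i then ExteriorAlgebra.ι K2 (Finsupp.single (⟨i, h⟩ : {i : ℕ // 1 ≤ i}) 1)
  else 0

/-- The coboundary of a generator:
`δ₁(e_i) = Σ_{a+b=i, 1 ≤ a < b} (a+b) e_a ∧ e_b`, coefficients mod 2. -/
noncomputable def δE (i : ℕ) : Lam1 :=
  ∑ a ∈ Finset.Ico 1 i, if a < i - a then (i : K2) • (E a * E (i - a)) else 0

lemma add_self (x : Lam1) : x + x = 0 := by
  have h1 : x + x = (1 + 1 : K2) • x := by rw [add_smul, one_smul]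
  rw [h1, show (1 + 1 : K2) = 0 by decide, zero_smul]

lemma E_sq (a : ℕ) : E a * E a = 0 := by
  unfold E
  split
  · exact ExteriorAlgebra.ι_sq_zero _
  · rw [mul_zero]

lemma E_comm (a b : ℕ) : E a * E b = E b * E a := by
  unfold E
  split <;> split
  case isTrue.isTrue ha hb =>
    set x := ExteriorAlgebra.ι K2 (Finsupp.single (⟨a, ha⟩ : {i : ℕ // 1 ≤ i}) (1:K2)) with hx
    set y := ExteriorAlgebra.ι K2 (Finsupp.single (⟨b, hb⟩ : {i : ℕ // 1 ≤ i}) (1:K2)) with hy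
    have h : x * y + y * x = 0 := ExteriorAlgebra.ι_add_mul_swap _ _
    calc x * y = x * y + (y * x + y * x) := by rw [add_self, add_zero]
      _ = (x * y + y * x) + y * x := by rw [add_assoc]
      _ = y * x := by rw [h, zero_add]
  all_goals simp

noncomputable def mon (a b c : ℕ) : Lam1 := E a * E b * E c

lemma mon_rot (a b c : ℕ) : mon a b c = mon c a b := by
  unfold mon
  rw [mul_assoc, E_comm b c, ← mul_assoc, E_comm a c, mul_assoc]

lemma mon_swap (a b c : ℕ) : mon a b c = mon b a c := by
  unfold mon; rw [E_comm a b]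

lemma mon_aba (a b : ℕ) : mon a b a = 0 := by
  rw [mon_rot]; unfold mon; rw [E_sq, zero_mul]

lemma mon_abb (a b : ℕ) : mon a b b = 0 := by
  unfold mon; rw [mul_assoc, E_sq, mul_zero]

lemma odd_cast {n : ℕ} (h : Odd n) : (n : K2) = 1 := by
  obtain ⟨k, rfl⟩ := h
  push_cast
  rw [show (2 : K2) = 0 by decide]
  ring


/-- `F N c = Σ_{a} [a < N-c-a] e_a e_{N-c-a} e_c`. -/
noncomputable def F (N c : ℕ) : Lam1 :=
  ∑ a ∈ Finset.Ico 1 (N - c), if a < N - c - a then mon a (N - c - a) c else 0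

lemma deltaE_mul {m n N : ℕ} (hm : Odd m) (h : m + n = N) :
    δE m * E n = F N n := by
  have hmn : N - n = m := by omega
  rw [δE, F, hmn, Finset.sum_mul]
  refine Finset.sum_congr rfl fun a _ => ?_
  split
  · rw [odd_cast hm, one_smul, mon]
  · rw [zero_mul]

lemma mul_deltaE {m n N : ℕ} (hn : Odd n) (h : m + n = N) :
    E m * δE n = F N m := by
  have hmn : N - m = n := by omega
  rw [δE, F, hmn, Finset.mul_sum]
  refine Finset.sum_congr rfl fun a _ => ?_
  split
  · rw [odd_cast hn, one_smul, mon_rot, mon, mul_assoc]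
  · rw [mul_zero]

/-- Reindex the sum over odd numbers `< 4i` into the two families. -/
lemma sum_split (i : ℕ) (G : ℕ → Lam1) :
    ∑ r ∈ Finset.range (2 * i), G (2 * r + 1)
      = ∑ r ∈ Finset.range i, (G (2 * i - 2 * r - 1) + G (2 * i + 2 * r + 1)) := by
  rw [Finset.sum_add_distrib]
  have h1 : ∑ r ∈ Finset.range i, G (2 * i - 2 * r - 1)
      = ∑ r ∈ Finset.range i, G (2 * r + 1) := by
    rw [← Finset.sum_range_reflect]
    refine Finset.sum_congr rfl fun r hr => ?_
    rw [Finset.mem_range] at hr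
    congr 1
    omega
  have h2 : ∑ r ∈ Finset.range i, G (2 * i + 2 * r + 1)
      = ∑ r ∈ Finset.Ico i (2 * i), G (2 * r + 1) := by
    rw [Finset.sum_Ico_eq_sum_range]
    refine Finset.sum_congr (by congr 1; omega) fun r _ => ?_
    congr 1
    omega
  rw [h1, h2, Finset.range_eq_Ico, ← Finset.sum_Ico_consecutive (fun r => G (2 * r + 1)) (by omega : 0 ≤ i) (by omega : i ≤ 2 * i), Finset.range_eq_Ico]

/-- The pairing involution on indices `⟨r, a⟩` (triple `(a, b, c)` with `c = 2r+1`,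
`b = 4i - c - a`). -/
def gI (i : ℕ) (p : (_ : ℕ) × ℕ) : (_ : ℕ) × ℕ :=
  if p.2 < 4*i - (2*p.1+1) - p.2 ∧ p.2 ≠ 2*p.1+1 ∧ 4*i - (2*p.1+1) - p.2 ≠ 2*p.1+1 then
    (if p.2 % 2 = 1 then ⟨p.2 / 2, min (4*i - (2*p.1+1) - p.2) (2*p.1+1)⟩
     else ⟨(4*i - (2*p.1+1) - p.2) / 2, min p.2 (2*p.1+1)⟩)
  else p

lemma gI_pos_odd (i r a : ℕ) (h1 : a < 4*i - (2*r+1) - a) (h2 : a ≠ 2*r+1)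
    (h3 : 4*i - (2*r+1) - a ≠ 2*r+1) (ha : a % 2 = 1) :
    gI i ⟨r, a⟩ = ⟨a / 2, min (4*i - (2*r+1) - a) (2*r+1)⟩ := by
  unfold gI
  rw [if_pos ⟨h1, h2, h3⟩, if_pos ha]

lemma gI_pos_even (i r a : ℕ) (h1 : a < 4*i - (2*r+1) - a) (h2 : a ≠ 2*r+1)
    (h3 : 4*i - (2*r+1) - a ≠ 2*r+1) (ha : ¬ (a % 2 = 1)) :
    gI i ⟨r, a⟩ = ⟨(4*i - (2*r+1) - a) / 2, min a (2*r+1)⟩ := by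
  unfold gI
  rw [if_pos ⟨h1, h2, h3⟩, if_neg ha]

lemma gI_neg (i r a : ℕ)
    (h : ¬ (a < 4*i - (2*r+1) - a ∧ a ≠ 2*r+1 ∧ 4*i - (2*r+1) - a ≠ 2*r+1)) :
    gI i ⟨r, a⟩ = ⟨r, a⟩ := by
  unfold gI
  rw [if_neg h]

def fI (i : ℕ) (p : (_ : ℕ) × ℕ) : Lam1 :=
  if p.2 < 4*i - (2*p.1+1) - p.2 then mon p.2 (4*i - (2*p.1+1) - p.2) (2*p.1+1) else 0

lemma fI_gI (i : ℕ) (p : (_ : ℕ) × ℕ) : fI i (gI i p) = fI i p := by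
  obtain ⟨r, a⟩ := p
  by_cases hgen : a < 4*i - (2*r+1) - a ∧ a ≠ 2*r+1 ∧ 4*i - (2*r+1) - a ≠ 2*r+1
  · obtain ⟨h1, h2, h3⟩ := hgen
    have hsum : a + (4*i - (2*r+1) - a) + (2*r+1) = 4*i := by omega
    by_cases ha : a % 2 = 1
    · rw [gI_pos_odd i r a h1 h2 h3 ha]
      simp only [fI]
      have e0 : 2*(a/2)+1 = a := by omega
      rw [e0]
      have e1 : 4*i - a - min (4*i - (2*r+1) - a) (2*r+1)
          = max (4*i - (2*r+1) - a) (2*r+1) := by omega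
      rw [e1, if_pos (by omega : min (4*i - (2*r+1) - a) (2*r+1)
          < max (4*i - (2*r+1) - a) (2*r+1)), if_pos h1]
      rcases le_total (4*i - (2*r+1) - a) (2*r+1) with hBC | hBC
      · rw [min_eq_left hBC, max_eq_right hBC, mon_rot (4*i - (2*r+1) - a) (2*r+1) a]
      · rw [min_eq_right hBC, max_eq_left hBC, mon_rot (2*r+1) (4*i - (2*r+1) - a) a,
          mon_rot a (2*r+1) (4*i - (2*r+1) - a),
          mon_swap (4*i - (2*r+1) - a) a (2*r+1)]
    · rw [gI_pos_even i r a h1 h2 h3 ha]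
      simp only [fI]
      have e0 : 2*((4*i - (2*r+1) - a)/2)+1 = 4*i - (2*r+1) - a := by omega
      rw [e0]
      have e1 : 4*i - (4*i - (2*r+1) - a) - min a (2*r+1) = max a (2*r+1) := by omega
      rw [e1, if_pos (by omega : min a (2*r+1) < max a (2*r+1)), if_pos h1]
      rcases le_total a (2*r+1) with hAC | hAC
      · rw [min_eq_left hAC, max_eq_right hAC, mon_rot a (2*r+1) (4*i - (2*r+1) - a),
          mon_swap (4*i - (2*r+1) - a) a (2*r+1)]
      · rw [min_eq_right hAC, max_eq_left hAC, mon_swap (2*r+1) a (4*i - (2*r+1) - a),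
          mon_rot a (2*r+1) (4*i - (2*r+1) - a),
          mon_swap (4*i - (2*r+1) - a) a (2*r+1)]
  · rw [gI_neg i r a hgen]

lemma sigma_mk_eq {a b c d : ℕ} (h1 : a = c) (h2 : b = d) :
    (⟨a, b⟩ : (_ : ℕ) × ℕ) = ⟨c, d⟩ := by
  subst h1; subst h2; rfl

lemma fI_nonzero {i r a : ℕ} (h : fI i ⟨r, a⟩ ≠ 0) :
    a < 4*i - (2*r+1) - a ∧ a ≠ 2*r+1 ∧ 4*i - (2*r+1) - a ≠ 2*r+1 := by
  by_contra hgen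
  apply h
  simp only [fI]
  by_cases h1 : a < 4*i - (2*r+1) - a
  · rw [if_pos h1]
    by_cases h2 : a = 2*r+1
    · rw [← h2, mon_aba]
    · have h3 : 4*i - (2*r+1) - a = 2*r+1 := by tauto
      rw [h3, mon_abb]
  · rw [if_neg h1]

lemma gI_ne {i : ℕ} {p : (_ : ℕ) × ℕ} (h : fI i p ≠ 0) : gI i p ≠ p := by
  obtain ⟨r, a⟩ := p
  obtain ⟨h1, h2, h3⟩ := fI_nonzero h
  by_cases ha : a % 2 = 1
  · rw [gI_pos_odd i r a h1 h2 h3 ha]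
    intro hEq
    have h5 : a / 2 = r := congrArg Sigma.fst hEq
    omega
  · rw [gI_pos_even i r a h1 h2 h3 ha]
    intro hEq
    have h5 : (4*i - (2*r+1) - a) / 2 = r := congrArg Sigma.fst hEq
    omega

lemma gI_mem {i : ℕ} {p : (_ : ℕ) × ℕ}
    (hp : p ∈ (Finset.range (2*i)).sigma (fun r => Finset.Ico 1 (4*i - (2*r+1)))) :
    gI i p ∈ (Finset.range (2*i)).sigma (fun r => Finset.Ico 1 (4*i - (2*r+1))) := by
  obtain ⟨r, a⟩ := p
  simp only [Finset.mem_sigma, Finset.mem_range, Finset.mem_Ico] at hp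
  obtain ⟨hr, ha1, ha2⟩ := hp
  by_cases hgen : a < 4*i - (2*r+1) - a ∧ a ≠ 2*r+1 ∧ 4*i - (2*r+1) - a ≠ 2*r+1
  · obtain ⟨h1, h2, h3⟩ := hgen
    by_cases ha : a % 2 = 1
    · rw [gI_pos_odd i r a h1 h2 h3 ha]
      simp only [Finset.mem_sigma, Finset.mem_range, Finset.mem_Ico]
      omega
    · rw [gI_pos_even i r a h1 h2 h3 ha]
      simp only [Finset.mem_sigma, Finset.mem_range, Finset.mem_Ico]
      omega
  · rw [gI_neg i r a hgen]
    simp only [Finset.mem_sigma, Finset.mem_range, Finset.mem_Ico]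
    omega

lemma gI_invol {i : ℕ} {p : (_ : ℕ) × ℕ}
    (hp : p ∈ (Finset.range (2*i)).sigma (fun r => Finset.Ico 1 (4*i - (2*r+1)))) :
    gI i (gI i p) = p := by
  obtain ⟨r, a⟩ := p
  simp only [Finset.mem_sigma, Finset.mem_range, Finset.mem_Ico] at hp
  obtain ⟨hr, ha1, ha2⟩ := hp
  by_cases hgen : a < 4*i - (2*r+1) - a ∧ a ≠ 2*r+1 ∧ 4*i - (2*r+1) - a ≠ 2*r+1
  · obtain ⟨h1, h2, h3⟩ := hgen
    have hsum : a + (4*i - (2*r+1) - a) + (2*r+1) = 4*i := by omega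
    by_cases ha : a % 2 = 1
    · rw [gI_pos_odd i r a h1 h2 h3 ha]
      -- a odd, b even, c odd
      rcases le_or_gt (4*i - (2*r+1) - a) (2*r+1) with hBC | hBC
      · -- B < C, min = B, B even
        have hmin : min (4*i - (2*r+1) - a) (2*r+1) = 4*i - (2*r+1) - a :=
          min_eq_left hBC
        rw [hmin, gI_pos_even i (a/2) (4*i - (2*r+1) - a) (by omega) (by omega)
          (by omega) (by omega)]
        exact sigma_mk_eq (by omega) (by omega)
      · -- C < B, min = C, C odd
        have hmin : min (4*i - (2*r+1) - a) (2*r+1) = 2*r+1 :=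
          min_eq_right (by omega)
        rw [hmin, gI_pos_odd i (a/2) (2*r+1) (by omega) (by omega) (by omega)
          (by omega)]
        exact sigma_mk_eq (by omega) (by omega)
    · rw [gI_pos_even i r a h1 h2 h3 ha]
      -- a even, b odd, c odd
      rcases le_or_gt a (2*r+1) with hAC | hAC
      · -- min = a, a even
        have hmin : min a (2*r+1) = a := min_eq_left hAC
        rw [hmin, gI_pos_even i ((4*i - (2*r+1) - a)/2) a (by omega) (by omega)
          (by omega) (by omega)]
        exact sigma_mk_eq (by omega) (by omega)
      · -- min = C, C odd
        have hmin : min a (2*r+1) = 2*r+1 := min_eq_right (by omega)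
        rw [hmin, gI_pos_odd i ((4*i - (2*r+1) - a)/2) (2*r+1) (by omega) (by omega)
          (by omega) (by omega)]
        exact sigma_mk_eq (by omega) (by omega)
  · rw [gI_neg i r a hgen, gI_neg i r a hgen]

lemma sum_F_zero (i : ℕ) : ∑ r ∈ Finset.range (2*i), F (4*i) (2*r+1) = 0 := by
  have h : ∀ r : ℕ, F (4*i) (2*r+1) = ∑ a ∈ Finset.Ico 1 (4*i - (2*r+1)), fI i ⟨r, a⟩ :=
    fun r => rfl
  calc ∑ r ∈ Finset.range (2*i), F (4*i) (2*r+1)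
      = ∑ r ∈ Finset.range (2*i), ∑ a ∈ Finset.Ico 1 (4*i - (2*r+1)), fI i ⟨r, a⟩ :=
        Finset.sum_congr rfl fun r _ => h r
    _ = ∑ p ∈ (Finset.range (2*i)).sigma (fun r => Finset.Ico 1 (4*i - (2*r+1))), fI i p :=
        (Finset.sum_sigma _ _ _).symm
    _ = 0 := Finset.sum_involution (fun p _ => gI i p)
        (fun p _ => by rw [fI_gI]; exact add_self _)
        (fun p _ hne => gI_ne hne)
        (fun p hp => gI_mem hp)
        (fun p hp => gI_invol hp)


/-- over `Z/2`, for `i ≥ 1`, the 2-cochain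
`y(i) = Σ_{r=0}^{i−1} e_{2i−2r−1} ∧ e_{2i+2r+1}` is a cocycle:
its coboundary (computed by the Leibniz rule) vanishes. -/
theorem y_is_cocycle (i : ℕ) (hi : 1 ≤ i) :
    (∑ r ∈ Finset.range i,
      (δE (2 * i - 2 * r - 1) * E (2 * i + 2 * r + 1)
        + E (2 * i - 2 * r - 1) * δE (2 * i + 2 * r + 1))) = 0 := by
  have key : ∀ r ∈ Finset.range i,
      δE (2 * i - 2 * r - 1) * E (2 * i + 2 * r + 1)
        + E (2 * i - 2 * r - 1) * δE (2 * i + 2 * r + 1)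
      = F (4*i) (2 * i - 2 * r - 1) + F (4*i) (2 * i + 2 * r + 1) := by
    intro r hr
    rw [Finset.mem_range] at hr
    have hm : Odd (2 * i - 2 * r - 1) := by rw [Nat.odd_iff]; omega
    have hn : Odd (2 * i + 2 * r + 1) := by rw [Nat.odd_iff]; omega
    have hmn : (2 * i - 2 * r - 1) + (2 * i + 2 * r + 1) = 4 * i := by omega
    rw [deltaE_mul hm hmn, mul_deltaE hn hmn, add_comm]
  rw [Finset.sum_congr rfl key, ← sum_split i (F (4*i)), sum_F_zero]
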